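/- For points r_1, r_2, r_3 in R^d with d ≥ 2, the contravariant metric tensor g^{μν} of the three-body radial Laplacian (as in the paper, a 3×3 matrix in the ρ variables) is positive semidefinite, and it is positive definite whenever the three points are not collinear. -/

import Mathlib

open Matrix


lemma not_collinear_linearIndependent {V : Type*} [AddCommGroup V] [Module ℝ V]
    {p₁ p₂ p₃ : V} (h : ¬ Collinear ℝ ({p₁, p₂, p₃} : Set V)) :
    LinearIndependent ℝ ![p₁ - p₂, p₁ - p₃] := by
  rw [LinearIndependent.pair_iff]
  intro s t hst
  by_contra hc
  apply h
  rw [collinear_iff_of_mem (Set.mem_insert p₁ _)]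
  rcases Classical.em (s = 0) with hs | hs
  · have ht : t ≠ 0 := fun ht => hc ⟨hs, ht⟩
    refine ⟨p₁ - p₂, fun p hp => ?_⟩
    rcases hp with hp | hp | hp
    · exact ⟨0, by rw [hp]; simp⟩
    · exact ⟨-1, by rw [hp, vadd_eq_add]; module⟩
    · refine ⟨s/t, ?_⟩
      rw [hp]
      refine smul_right_injective V ht ?_
      dsimp only
      have h2 : t * (s/t) = s := by field_simp
      have h4 : s • (p₁ - p₂) = -(t • (p₁ - p₃)) := eq_neg_of_add_eq_zero_left hst
      rw [vadd_eq_add, smul_add, smul_smul, h2, h4, smul_sub]; abel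
  · refine ⟨p₁ - p₃, fun p hp => ?_⟩
    rcases hp with hp | hp | hp
    · exact ⟨0, by rw [hp]; simp⟩
    · refine ⟨t/s, ?_⟩
      rw [hp]
      refine smul_right_injective V hs ?_
      dsimp only
      have h2 : s * (t/s) = t := by field_simp
      have h4 : t • (p₁ - p₃) = -(s • (p₁ - p₂)) := eq_neg_of_add_eq_zero_right hst
      rw [vadd_eq_add, smul_add, smul_smul, h2, h4, smul_sub]; abel
    · exact ⟨-1, by rw [hp, vadd_eq_add]; module⟩

set_option maxHeartbeats 1000000 in
/-- The three-body contravariant metric tensor, evaluated at squared distances of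
actual points `r₁ r₂ r₃ ∈ ℝ^d` (`d ≥ 2`), is positive semidefinite, and positive
definite whenever the three points are not collinear. -/
theorem threeBody_metric_posDef
    {d : ℕ} (hd : 2 ≤ d)
    (m₁ m₂ m₃ : ℝ) (hm₁ : 0 < m₁) (hm₂ : 0 < m₂) (hm₃ : 0 < m₃)
    (r₁ r₂ r₃ : EuclideanSpace ℝ (Fin d))
    (ρ₁₂ ρ₁₃ ρ₂₃ : ℝ)
    (h₁₂ : ρ₁₂ = ‖r₁ - r₂‖ ^ 2) (h₁₃ : ρ₁₃ = ‖r₁ - r₃‖ ^ 2)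
    (h₂₃ : ρ₂₃ = ‖r₂ - r₃‖ ^ 2)
    (g : Matrix (Fin 3) (Fin 3) ℝ)
    (hg : g = !![2 * (m₁ + m₂) / (m₁ * m₂) * ρ₁₂, (ρ₁₂ + ρ₁₃ - ρ₂₃) / m₁,
          (ρ₁₂ + ρ₂₃ - ρ₁₃) / m₂;
        (ρ₁₂ + ρ₁₃ - ρ₂₃) / m₁, 2 * (m₁ + m₃) / (m₁ * m₃) * ρ₁₃,
          (ρ₁₃ + ρ₂₃ - ρ₁₂) / m₃;
        (ρ₁₂ + ρ₂₃ - ρ₁₃) / m₂, (ρ₁₃ + ρ₂₃ - ρ₁₂) / m₃,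
          2 * (m₂ + m₃) / (m₂ * m₃) * ρ₂₃]) :
    g.PosSemidef ∧ (¬ Collinear ℝ ({r₁, r₂, r₃} : Set (EuclideanSpace ℝ (Fin d))) →
      g.PosDef) := by
  set v₁ : EuclideanSpace ℝ (Fin d) := r₁ - r₂ with hv₁
  set v₂ : EuclideanSpace ℝ (Fin d) := r₁ - r₃ with hv₂
  set v₃ : EuclideanSpace ℝ (Fin d) := r₂ - r₃ with hv₃
  have hv3 : v₃ = v₂ - v₁ := by rw [hv₁, hv₂, hv₃]; abel
  have hn1 : ρ₁₂ = ‖v₁‖ ^ 2 := h₁₂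
  have hn2 : ρ₁₃ = ‖v₂‖ ^ 2 := h₁₃
  have hn3 : ρ₂₃ = ‖v₃‖ ^ 2 := h₂₃
  have hA : inner ℝ v₁ v₂ = (ρ₁₂ + ρ₁₃ - ρ₂₃) / 2 := by
    have h := norm_sub_sq_real v₂ v₁
    rw [← hv3] at h
    rw [hn1, hn2, hn3, h, real_inner_comm v₁ v₂]; ring
  have hB : inner ℝ v₁ v₃ = -((ρ₁₂ + ρ₂₃ - ρ₁₃) / 2) := by
    rw [hv3, inner_sub_right, hA, real_inner_self_eq_norm_sq, ← hn1]; ring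
  have hA' : inner ℝ v₂ v₁ = (ρ₁₂ + ρ₁₃ - ρ₂₃) / 2 := by
    rw [real_inner_comm]; exact hA
  have hC : inner ℝ v₂ v₃ = (ρ₁₃ + ρ₂₃ - ρ₁₂) / 2 := by
    rw [hv3, inner_sub_right, hA', real_inner_self_eq_norm_sq, ← hn2]; ring
  have key : ∀ x : Fin 3 → ℝ, x ⬝ᵥ (g *ᵥ x) =
      2/m₁ * ‖x 0 • v₁ + x 1 • v₂‖ ^ 2 + 2/m₂ * ‖x 0 • v₁ - x 2 • v₃‖ ^ 2
        + 2/m₃ * ‖x 1 • v₂ + x 2 • v₃‖ ^ 2 := by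
    intro x
    rw [hg, norm_add_sq_real, norm_sub_sq_real, norm_add_sq_real]
    simp only [norm_smul, real_inner_smul_left, real_inner_smul_right,
      Real.norm_eq_abs, mul_pow, sq_abs, hA, hB, hC, ← hn1, ← hn2, ← hn3]
    simp only [Matrix.mulVec, dotProduct, Fin.sum_univ_three, Matrix.of_apply, Matrix.cons_val_two, Matrix.tail_cons,
      Matrix.cons_val', Matrix.cons_val_zero, Matrix.cons_val_one,
      Matrix.head_cons, Matrix.empty_val', Matrix.cons_val_fin_one,
      Matrix.head_fin_const]
    field_simp
    ring
  have hherm : g.IsHermitian := by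
    rw [hg]
    show _ᴴ = _
    ext i j
    fin_cases i <;> fin_cases j <;>
      simp [Matrix.conjTranspose_apply]
  have hsemi : g.PosSemidef := by
    refine posSemidef_iff_dotProduct_mulVec.mpr ⟨hherm, fun x => ?_⟩
    rw [star_trivial, key x]
    have := sq_nonneg ‖x 0 • v₁ + x 1 • v₂‖
    have := sq_nonneg ‖x 0 • v₁ - x 2 • v₃‖
    have := sq_nonneg ‖x 1 • v₂ + x 2 • v₃‖
    have : 0 < 2/m₁ := by positivity
    have : 0 < 2/m₂ := by positivity
    have : 0 < 2/m₃ := by positivity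
    positivity
  refine ⟨hsemi, fun hncol => posDef_iff_dotProduct_mulVec.mpr ⟨hherm, fun x hx => ?_⟩⟩
  rw [star_trivial, key x]
  have li : LinearIndependent ℝ ![v₁, v₂] := not_collinear_linearIndependent hncol
  rw [LinearIndependent.pair_iff] at li
  by_contra hle
  push_neg at hle
  have t1 : (0:ℝ) ≤ 2/m₁ * ‖x 0 • v₁ + x 1 • v₂‖ ^ 2 := by positivity
  have t2 : (0:ℝ) ≤ 2/m₂ * ‖x 0 • v₁ - x 2 • v₃‖ ^ 2 := by positivity
  have t3 : (0:ℝ) ≤ 2/m₃ * ‖x 1 • v₂ + x 2 • v₃‖ ^ 2 := by positivity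
  have hm₁' : 0 < 2/m₁ := by positivity
  have hm₂' : 0 < 2/m₂ := by positivity
  have e1 : ‖x 0 • v₁ + x 1 • v₂‖ ^ 2 = 0 := by nlinarith [sq_nonneg ‖x 0 • v₁ + x 1 • v₂‖]
  have e2 : ‖x 0 • v₁ - x 2 • v₃‖ ^ 2 = 0 := by nlinarith [sq_nonneg ‖x 0 • v₁ - x 2 • v₃‖]
  have w1 : x 0 • v₁ + x 1 • v₂ = 0 := by
    have := pow_eq_zero_iff (n := 2) (by norm_num) |>.mp e1
    exact norm_eq_zero.mp this
  have w2 : x 0 • v₁ - x 2 • v₃ = 0 := by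
    have := pow_eq_zero_iff (n := 2) (by norm_num) |>.mp e2
    exact norm_eq_zero.mp this
  obtain ⟨hx0, hx1⟩ := li (x 0) (x 1) w1
  have hv3ne : v₃ ≠ 0 := by
    intro h0
    have : (1:ℝ) • v₁ + (-1:ℝ) • v₂ = 0 := by
      rw [hv3] at h0
      have : v₂ = v₁ := by rwa [sub_eq_zero] at h0
      rw [this]; module
    exact one_ne_zero (li 1 (-1) this).1
  have hx2 : x 2 = 0 := by
    rw [hx0, zero_smul, zero_sub, neg_eq_zero] at w2
    rcases smul_eq_zero.mp w2 with h | h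
    · exact h
    · exact absurd h hv3ne
  apply hx
  funext i
  fin_cases i
  · exact hx0
  · exact hx1
  · exact hx2
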